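/- Let v : ℝ → ℝ satisfy c₁ e^{-β|ξ|^α} ≤ v(ξ) ≤ c₂ e^{-β|ξ|^α} with α, β > 0 and c₁, c₂ > 0. Then there is C > 0 such that |∫₀^ξ v(η)^{-2/n} dη| ≤ C e^{2β|ξ|^α/n} (1+|ξ|)^{1-α} for all ξ ∈ ℝ. In particular, if α ≥ 1 then v(ξ)² ≤ C' |∫₀^ξ v(η)^{-2/n} dη|^{-n} for |ξ| large. -/

import Mathlib

open Real intervalIntegral

lemma cont_exp_rpow (γ α : ℝ) (hα : 0 < α) :
    Continuous fun η : ℝ => Real.exp (γ * η ^ α) := by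
  have h1 : Continuous fun η : ℝ => η ^ α := by
    rw [continuous_iff_continuousAt]
    intro x
    exact Real.continuousAt_rpow_const x α (Or.inr hα.le)
  exact Real.continuous_exp.comp ((continuous_const.mul h1))

lemma hasDerivF (γ α η : ℝ) (hη : 0 < η) :
    HasDerivAt (fun x : ℝ => x ^ (1 - α) * Real.exp (γ * x ^ α))
      (Real.exp (γ * η ^ α) * (γ * α + (1 - α) * η ^ (-α))) η := by
  have h1 : HasDerivAt (fun x : ℝ => x ^ (1 - α)) ((1 - α) * η ^ (1 - α - 1)) η :=
    Real.hasDerivAt_rpow_const (Or.inl hη.ne')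
  have h2 : HasDerivAt (fun x : ℝ => x ^ α) (α * η ^ (α - 1)) η :=
    Real.hasDerivAt_rpow_const (Or.inl hη.ne')
  have h3 : HasDerivAt (fun x : ℝ => Real.exp (γ * x ^ α))
      (Real.exp (γ * η ^ α) * (γ * (α * η ^ (α - 1)))) η := (h2.const_mul γ).exp
  have := h1.mul h3
  refine HasDerivAt.congr_deriv this ?_
  symm
  have e1 : (1 : ℝ) - α - 1 = -α := by ring
  have e2 : η ^ (1 - α) * η ^ (α - 1) = 1 := by
    rw [← Real.rpow_add hη]; norm_num
  rw [e1]
  calc Real.exp (γ * η ^ α) * (γ * α + (1 - α) * η ^ (-α))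
      = (1 - α) * η ^ (-α) * Real.exp (γ * η ^ α)
        + (η ^ (1 - α) * η ^ (α - 1)) * (γ * α * Real.exp (γ * η ^ α)) := by rw [e2]; ring
    _ = _ := by ring

lemma int_big (γ α : ℝ) (hγ : 0 < γ) (hα : 0 < α) {a t : ℝ} (ha : 0 < a) (hat : a ≤ t)
    (hmaj : ∀ η, a ≤ η → γ * α / 2 ≤ γ * α + (1 - α) * η ^ (-α)) :
    γ * α / 2 * ∫ η in a..t, Real.exp (γ * η ^ α) ≤ t ^ (1 - α) * Real.exp (γ * t ^ α) := by
  set ψ : ℝ → ℝ := fun η => Real.exp (γ * η ^ α) * (γ * α + (1 - α) * η ^ (-α)) with hψ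
  have hsub : Set.uIcc a t = Set.Icc a t := Set.uIcc_of_le hat
  have hposIcc : ∀ x ∈ Set.Icc a t, (0:ℝ) < x := fun x hx => lt_of_lt_of_le ha hx.1
  have hcontψ : ContinuousOn ψ (Set.uIcc a t) := by
    rw [hsub]
    apply ((cont_exp_rpow γ α hα).continuousOn).mul
    apply continuousOn_const.add
    apply continuousOn_const.mul
    intro x hx
    exact (Real.continuousAt_rpow_const x (-α) (Or.inl (hposIcc x hx).ne')).continuousWithinAt
  have hintψ : IntervalIntegrable ψ MeasureTheory.volume a t := hcontψ.intervalIntegrable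
  have hFTC : (∫ η in a..t, ψ η)
      = t ^ (1 - α) * Real.exp (γ * t ^ α) - a ^ (1 - α) * Real.exp (γ * a ^ α) := by
    apply intervalIntegral.integral_eq_sub_of_hasDerivAt
    · intro η hη
      rw [hsub] at hη
      exact hasDerivF γ α η (hposIcc η hη)
    · exact hintψ
  have hinte : IntervalIntegrable (fun η => γ * α / 2 * Real.exp (γ * η ^ α))
      MeasureTheory.volume a t :=
    (continuous_const.mul (cont_exp_rpow γ α hα)).intervalIntegrable a t
  have hmono : (∫ η in a..t, γ * α / 2 * Real.exp (γ * η ^ α)) ≤ ∫ η in a..t, ψ η := by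
    apply intervalIntegral.integral_mono_on hat hinte hintψ
    intro x hx
    have := mul_le_mul_of_nonneg_left (hmaj x hx.1) (Real.exp_nonneg (γ * x ^ α))
    calc γ * α / 2 * Real.exp (γ * x ^ α)
        = Real.exp (γ * x ^ α) * (γ * α / 2) := by ring
      _ ≤ ψ x := this
  rw [intervalIntegral.integral_const_mul] at hmono
  have hFa : 0 ≤ a ^ (1 - α) * Real.exp (γ * a ^ α) :=
    mul_nonneg (Real.rpow_nonneg ha.le _) (Real.exp_nonneg _)
  rw [hFTC] at hmono
  linarith

lemma low_bound (γ α : ℝ) (hγ : 0 < γ) (hα : 0 < α) :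
    ∃ m > (0:ℝ), ∀ t : ℝ, 0 ≤ t →
      m ≤ Real.exp (γ * t ^ α) * (1 + t) ^ (1 - α) := by
  refine ⟨min 1 ((2:ℝ) ^ (1 - α) * min 1 γ), by positivity, fun t ht => ?_⟩
  have hE1 : (1:ℝ) ≤ Real.exp (γ * t ^ α) :=
    Real.one_le_exp (by positivity)
  rcases le_or_gt 0 (1 - α) with h | h
  · have hP : (1:ℝ) ≤ (1 + t) ^ (1 - α) := by
      calc (1:ℝ) = (1:ℝ) ^ (1 - α) := (Real.one_rpow _).symm
        _ ≤ (1 + t) ^ (1 - α) := Real.rpow_le_rpow zero_le_one (by linarith) h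
    calc min 1 ((2:ℝ) ^ (1 - α) * min 1 γ) ≤ 1 := min_le_left _ _
      _ ≤ Real.exp (γ * t ^ α) * (1 + t) ^ (1 - α) := by nlinarith
  · rcases le_or_gt t 1 with ht1 | ht1
    · have hP : (2:ℝ) ^ (1 - α) ≤ (1 + t) ^ (1 - α) :=
        Real.rpow_le_rpow_of_nonpos (by linarith) (by linarith) h.le
      have h2 : (0:ℝ) < (2:ℝ) ^ (1 - α) := by positivity
      calc min 1 ((2:ℝ) ^ (1 - α) * min 1 γ) ≤ (2:ℝ) ^ (1 - α) * min 1 γ := min_le_right _ _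
        _ ≤ (2:ℝ) ^ (1 - α) * 1 := by
            exact mul_le_mul_of_nonneg_left (min_le_left _ _) h2.le
        _ = (2:ℝ) ^ (1 - α) := mul_one _
        _ ≤ (1 + t) ^ (1 - α) := hP
        _ ≤ Real.exp (γ * t ^ α) * (1 + t) ^ (1 - α) := by
            nlinarith [Real.rpow_nonneg (show (0:ℝ) ≤ 1 + t by linarith) (1 - α)]
    · have htpos : (0:ℝ) < t := lt_trans one_pos ht1
      have hE : γ * t ^ (α - 1) ≤ Real.exp (γ * t ^ α) := by
        have h1 : t ^ (α - 1) ≤ t ^ α :=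
          Real.rpow_le_rpow_of_exponent_le ht1.le (by linarith)
        have h2 : γ * t ^ α ≤ Real.exp (γ * t ^ α) := by
          linarith [Real.add_one_le_exp (γ * t ^ α)]
        nlinarith
      have hP : (2:ℝ) ^ (1 - α) * t ^ (1 - α) ≤ (1 + t) ^ (1 - α) := by
        have h1 : (2 * t) ^ (1 - α) ≤ (1 + t) ^ (1 - α) :=
          Real.rpow_le_rpow_of_nonpos (by linarith) (by linarith) h.le
        rwa [Real.mul_rpow (by norm_num) htpos.le] at h1
      have hprod : γ * t ^ (α - 1) * ((2:ℝ) ^ (1 - α) * t ^ (1 - α))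
          = (2:ℝ) ^ (1 - α) * γ := by
        have : t ^ (α - 1) * t ^ (1 - α) = 1 := by
          rw [← Real.rpow_add htpos]; norm_num
        calc γ * t ^ (α - 1) * ((2:ℝ) ^ (1 - α) * t ^ (1 - α))
            = (2:ℝ) ^ (1 - α) * γ * (t ^ (α - 1) * t ^ (1 - α)) := by ring
          _ = (2:ℝ) ^ (1 - α) * γ := by rw [this, mul_one]
      have hmul : γ * t ^ (α - 1) * ((2:ℝ) ^ (1 - α) * t ^ (1 - α))
          ≤ Real.exp (γ * t ^ α) * (1 + t) ^ (1 - α) :=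
        mul_le_mul hE hP (by positivity) (Real.exp_nonneg _)
      have h2 : (0:ℝ) < (2:ℝ) ^ (1 - α) := by positivity
      calc min 1 ((2:ℝ) ^ (1 - α) * min 1 γ) ≤ (2:ℝ) ^ (1 - α) * min 1 γ := min_le_right _ _
        _ ≤ (2:ℝ) ^ (1 - α) * γ := mul_le_mul_of_nonneg_left (min_le_right _ _) h2.le
        _ = γ * t ^ (α - 1) * ((2:ℝ) ^ (1 - α) * t ^ (1 - α)) := hprod.symm
        _ ≤ _ := hmul

lemma tpow_bound (α : ℝ) {t : ℝ} (ht : 1 ≤ t) :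
    t ^ (1 - α) ≤ max 1 ((2:ℝ) ^ (α - 1)) * (1 + t) ^ (1 - α) := by
  have htpos : (0:ℝ) < t := lt_of_lt_of_le one_pos ht
  have hPnn : (0:ℝ) ≤ (1 + t) ^ (1 - α) := Real.rpow_nonneg (by linarith) _
  rcases le_or_gt 0 (1 - α) with h | h
  · have h1 : t ^ (1 - α) ≤ (1 + t) ^ (1 - α) :=
      Real.rpow_le_rpow htpos.le (by linarith) h
    calc t ^ (1 - α) ≤ (1 + t) ^ (1 - α) := h1
      _ = 1 * (1 + t) ^ (1 - α) := (one_mul _).symm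
      _ ≤ max 1 ((2:ℝ) ^ (α - 1)) * (1 + t) ^ (1 - α) :=
          mul_le_mul_of_nonneg_right (le_max_left _ _) hPnn
  · have h1 : (1 + t) ^ (α - 1) ≤ (2:ℝ) ^ (α - 1) * t ^ (α - 1) := by
      have := Real.rpow_le_rpow (by linarith : (0:ℝ) ≤ 1 + t)
        (by linarith : 1 + t ≤ 2 * t) (by linarith : 0 ≤ α - 1)
      rwa [Real.mul_rpow (by norm_num) htpos.le] at this
    have key : t ^ (1 - α) * (1 + t) ^ (α - 1) ≤ (2:ℝ) ^ (α - 1) := by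
      have h2 : t ^ (1 - α) * (1 + t) ^ (α - 1)
          ≤ t ^ (1 - α) * ((2:ℝ) ^ (α - 1) * t ^ (α - 1)) :=
        mul_le_mul_of_nonneg_left h1 (Real.rpow_nonneg htpos.le _)
      have h3 : t ^ (1 - α) * ((2:ℝ) ^ (α - 1) * t ^ (α - 1)) = (2:ℝ) ^ (α - 1) := by
        have : t ^ (1 - α) * t ^ (α - 1) = 1 := by
          rw [← Real.rpow_add htpos]; norm_num
        calc t ^ (1 - α) * ((2:ℝ) ^ (α - 1) * t ^ (α - 1))
            = (2:ℝ) ^ (α - 1) * (t ^ (1 - α) * t ^ (α - 1)) := by ring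
          _ = (2:ℝ) ^ (α - 1) := by rw [this, mul_one]
      linarith
    have hone : (1 + t) ^ (α - 1) * (1 + t) ^ (1 - α) = 1 := by
      rw [← Real.rpow_add (by linarith : (0:ℝ) < 1 + t)]; norm_num
    calc t ^ (1 - α)
        = t ^ (1 - α) * ((1 + t) ^ (α - 1) * (1 + t) ^ (1 - α)) := by rw [hone, mul_one]
      _ = (t ^ (1 - α) * (1 + t) ^ (α - 1)) * (1 + t) ^ (1 - α) := by ring
      _ ≤ (2:ℝ) ^ (α - 1) * (1 + t) ^ (1 - α) := mul_le_mul_of_nonneg_right key hPnn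
      _ ≤ max 1 ((2:ℝ) ^ (α - 1)) * (1 + t) ^ (1 - α) :=
          mul_le_mul_of_nonneg_right (le_max_right _ _) hPnn
lemma int_small (γ α : ℝ) (hγ : 0 < γ) (hα : 0 < α) {a b : ℝ} (ha : 0 ≤ a) (hab : a ≤ b) :
    (∫ η in a..b, Real.exp (γ * η ^ α)) ≤ (b - a) * Real.exp (γ * b ^ α) := by
  have hint : IntervalIntegrable (fun η => Real.exp (γ * η ^ α)) MeasureTheory.volume a b :=
    ((cont_exp_rpow γ α hα)).intervalIntegrable a b
  have h := intervalIntegral.integral_mono_on hab hint intervalIntegrable_const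
    (fun x hx => Real.exp_le_exp.2 (mul_le_mul_of_nonneg_left
      (Real.rpow_le_rpow (le_trans ha hx.1) hx.2 hα.le) hγ.le))
  rwa [intervalIntegral.integral_const, smul_eq_mul] at h
lemma lemA (γ α : ℝ) (hγ : 0 < γ) (hα : 0 < α) :
    ∃ C > (0:ℝ), ∀ t : ℝ, 0 ≤ t →
      (∫ η in (0:ℝ)..t, Real.exp (γ * η ^ α)) ≤
        C * (Real.exp (γ * t ^ α) * (1 + t) ^ (1 - α)) := by
  obtain ⟨m, hm, hlow⟩ := low_bound γ α hγ hα
  set a := max 1 ((2 * |1 - α| / (γ * α)) ^ (α⁻¹)) with ha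
  have ha1 : (1:ℝ) ≤ a := le_max_left _ _
  have hapos : (0:ℝ) < a := lt_of_lt_of_le one_pos ha1
  have hmaj : ∀ η, a ≤ η → γ * α / 2 ≤ γ * α + (1 - α) * η ^ (-α) := by
    intro η hη
    have hηpos : (0:ℝ) < η := lt_of_lt_of_le hapos hη
    have hηα : (0:ℝ) < η ^ α := Real.rpow_pos_of_pos hηpos α
    have key : |1 - α| * η ^ (-α) ≤ γ * α / 2 := by
      rcases eq_or_ne (1 - α) 0 with h | h
      · rw [h, abs_zero, zero_mul]; positivity
      · have hx : (0:ℝ) ≤ 2 * |1 - α| / (γ * α) := by positivity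
        have h1 : (2 * |1 - α| / (γ * α)) ^ (α⁻¹) ≤ η := le_trans (le_max_right _ _) hη
        have h2 : 2 * |1 - α| / (γ * α) ≤ η ^ α := by
          calc 2 * |1 - α| / (γ * α)
              = ((2 * |1 - α| / (γ * α)) ^ (α⁻¹)) ^ α := (Real.rpow_inv_rpow hx hα.ne').symm
            _ ≤ η ^ α := Real.rpow_le_rpow (Real.rpow_nonneg hx _) h1 hα.le
        rw [Real.rpow_neg hηpos.le, ← div_eq_mul_inv, div_le_iff₀ hηα]
        have hγα : (0:ℝ) < γ * α := by positivity
        rw [div_le_iff₀ hγα] at h2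
        nlinarith
    have habs : |(1 - α) * η ^ (-α)| = |1 - α| * η ^ (-α) := by
      rw [abs_mul, abs_of_nonneg (Real.rpow_nonneg hηpos.le _)]
    have hneg := neg_abs_le ((1 - α) * η ^ (-α))
    rw [habs] at hneg
    linarith
  set m₂ := min 1 ((1 + a) ^ (1 - α)) with hm₂def
  have hm₂ : (0:ℝ) < m₂ := by
    apply lt_min one_pos
    positivity
  set K := a * Real.exp (γ * a ^ α) with hKdef
  have hK : (0:ℝ) < K := by positivity
  set c₃ := max 1 ((2:ℝ) ^ (α - 1)) with hc₃def
  have hc₃ : (0:ℝ) < c₃ := lt_of_lt_of_le one_pos (le_max_left _ _)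
  refine ⟨a / m₂ + K / m + 2 / (γ * α) * c₃, by positivity, fun t ht => ?_⟩
  set E := Real.exp (γ * t ^ α) with hEdef
  set P := (1 + t) ^ (1 - α) with hPdef
  have hE : (0:ℝ) < E := Real.exp_pos _
  have hP : (0:ℝ) ≤ P := Real.rpow_nonneg (by linarith) _
  rcases le_or_gt t a with hta | hta
  · -- small case
    have hm₂P : m₂ ≤ P := by
      rcases le_or_gt 0 (1 - α) with h | h
      · calc m₂ ≤ 1 := min_le_left _ _
          _ = (1:ℝ) ^ (1 - α) := (Real.one_rpow _).symm
          _ ≤ P := Real.rpow_le_rpow zero_le_one (by linarith) h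
      · calc m₂ ≤ (1 + a) ^ (1 - α) := min_le_right _ _
          _ ≤ P := Real.rpow_le_rpow_of_nonpos (by linarith) (by linarith) h.le
    have h1 : (∫ η in (0:ℝ)..t, Real.exp (γ * η ^ α)) ≤ t * E := by
      have := int_small γ α hγ hα (le_refl (0:ℝ)) ht
      simpa using this
    have h2 : t * E ≤ a * E := mul_le_mul_of_nonneg_right (le_trans hta (le_refl a)) hE.le
    have h3 : a * E ≤ a / m₂ * (E * P) := by
      rw [div_mul_eq_mul_div, le_div_iff₀ hm₂]
      nlinarith [mul_le_mul_of_nonneg_left hm₂P (mul_nonneg hapos.le hE.le)]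
    have hrest : (0:ℝ) ≤ (K / m + 2 / (γ * α) * c₃) * (E * P) := by positivity
    calc (∫ η in (0:ℝ)..t, Real.exp (γ * η ^ α)) ≤ a / m₂ * (E * P) := by linarith
      _ ≤ (a / m₂ + K / m + 2 / (γ * α) * c₃) * (E * P) := by nlinarith
  · -- large case
    have hint1 : IntervalIntegrable (fun η => Real.exp (γ * η ^ α)) MeasureTheory.volume 0 a :=
      (cont_exp_rpow γ α hα).intervalIntegrable _ _
    have hint2 : IntervalIntegrable (fun η => Real.exp (γ * η ^ α)) MeasureTheory.volume a t :=
      (cont_exp_rpow γ α hα).intervalIntegrable _ _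
    have hsplit : (∫ η in (0:ℝ)..t, Real.exp (γ * η ^ α))
        = (∫ η in (0:ℝ)..a, Real.exp (γ * η ^ α)) + ∫ η in a..t, Real.exp (γ * η ^ α) :=
      (intervalIntegral.integral_add_adjacent_intervals hint1 hint2).symm
    have hp1 : (∫ η in (0:ℝ)..a, Real.exp (γ * η ^ α)) ≤ K := by
      have := int_small γ α hγ hα (le_refl (0:ℝ)) hapos.le
      simpa [hKdef] using this
    have hp1' : K ≤ K / m * (E * P) := by
      have h := hlow t ht
      rw [← hEdef, ← hPdef] at h
      calc K = K / m * m := (div_mul_cancel₀ K hm.ne').symm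
        _ ≤ K / m * (E * P) := mul_le_mul_of_nonneg_left h (by positivity)
    have hγα : (0:ℝ) < γ * α / 2 := by positivity
    have hbig := int_big γ α hγ hα hapos hta.le hmaj
    have hp2 : (∫ η in a..t, Real.exp (γ * η ^ α)) ≤ 2 / (γ * α) * (t ^ (1 - α) * E) := by
      rw [← hEdef] at hbig
      have h2 : (∫ η in a..t, Real.exp (γ * η ^ α)) ≤ t ^ (1 - α) * E / (γ * α / 2) :=
        (le_div_iff₀ hγα).mpr (by linarith)
      calc (∫ η in a..t, Real.exp (γ * η ^ α)) ≤ t ^ (1 - α) * E / (γ * α / 2) := h2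
        _ = 2 / (γ * α) * (t ^ (1 - α) * E) := by field_simp
    have htp : t ^ (1 - α) ≤ c₃ * P := by
      rw [hPdef, hc₃def]
      exact tpow_bound α (le_trans ha1 hta.le)
    have hp2' : 2 / (γ * α) * (t ^ (1 - α) * E) ≤ 2 / (γ * α) * c₃ * (E * P) := by
      have : t ^ (1 - α) * E ≤ c₃ * P * E := mul_le_mul_of_nonneg_right htp hE.le
      calc 2 / (γ * α) * (t ^ (1 - α) * E) ≤ 2 / (γ * α) * (c₃ * P * E) := by
            apply mul_le_mul_of_nonneg_left this; positivity
        _ = 2 / (γ * α) * c₃ * (E * P) := by ring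
    have haux : (0:ℝ) ≤ a / m₂ * (E * P) := by positivity
    calc (∫ η in (0:ℝ)..t, Real.exp (γ * η ^ α))
        ≤ K / m * (E * P) + 2 / (γ * α) * c₃ * (E * P) := by
          rw [hsplit]; linarith
      _ ≤ (a / m₂ + K / m + 2 / (γ * α) * c₃) * (E * P) := by nlinarith

theorem stmt_6 (v : ℝ → ℝ) (hv : Continuous v) (α β c₁ c₂ : ℝ)
    (hα : 0 < α) (hβ : 0 < β) (hc₁ : 0 < c₁) (hc₂ : 0 < c₂) (n : ℕ) (hn : 1 ≤ n)
    (hlow : ∀ ξ : ℝ, c₁ * Real.exp (-β * |ξ| ^ α) ≤ v ξ)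
    (hup : ∀ ξ : ℝ, v ξ ≤ c₂ * Real.exp (-β * |ξ| ^ α)) :
    (∃ C > (0:ℝ), ∀ ξ : ℝ,
      |∫ η in (0:ℝ)..ξ, v η ^ (-(2:ℝ) / (n:ℝ))| ≤
        C * Real.exp (2 * β * |ξ| ^ α / (n:ℝ)) * (1 + |ξ|) ^ (1 - α)) ∧
    (1 ≤ α → ∃ C' > (0:ℝ), ∃ R : ℝ, ∀ ξ : ℝ, R ≤ |ξ| →
      v ξ ^ (2:ℕ) * |∫ η in (0:ℝ)..ξ, v η ^ (-(2:ℝ) / (n:ℝ))| ^ (n:ℕ) ≤ C') := by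
  have hnR : (0:ℝ) < (n:ℝ) := by exact_mod_cast hn
  set p : ℝ := -(2:ℝ) / (n:ℝ) with hpdef
  have hp : p ≤ 0 := by
    apply div_nonpos_of_nonpos_of_nonneg <;> [norm_num; exact hnR.le]
  set γ : ℝ := 2 * β / (n:ℝ) with hγdef
  have hγ : 0 < γ := by positivity
  have hvpos : ∀ ξ, 0 < v ξ := fun ξ => lt_of_lt_of_le (by positivity) (hlow ξ)
  set f : ℝ → ℝ := fun η => v η ^ p with hfdef
  have hcontf : Continuous f := hv.rpow_const (fun x => Or.inl (hvpos x).ne')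
  have hfnn : ∀ η, 0 ≤ f η := fun η => Real.rpow_nonneg (hvpos η).le p
  set cF : ℝ := c₁ ^ p with hcFdef
  have hcF : 0 < cF := Real.rpow_pos_of_pos hc₁ p
  have hpt : ∀ η : ℝ, f η ≤ cF * Real.exp (γ * |η| ^ α) := by
    intro η
    have h1 : v η ^ p ≤ (c₁ * Real.exp (-β * |η| ^ α)) ^ p :=
      Real.rpow_le_rpow_of_nonpos (by positivity) (hlow η) hp
    have h2 : (c₁ * Real.exp (-β * |η| ^ α)) ^ p
        = cF * Real.exp (γ * |η| ^ α) := by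
      rw [Real.mul_rpow hc₁.le (Real.exp_nonneg _), Real.rpow_def_of_pos (Real.exp_pos _),
        Real.log_exp]
      congr 1
      rw [hγdef, hpdef]
      ring
    rw [hfdef]; dsimp only; rw [h2] at h1; exact h1
  have hcontg : Continuous fun η : ℝ => cF * Real.exp (γ * |η| ^ α) :=
    continuous_const.mul ((cont_exp_rpow γ α hα).comp continuous_abs)
  -- key bound via |ξ|
  have habs : ∀ ξ : ℝ, |∫ η in (0:ℝ)..ξ, f η| ≤
      cF * ∫ η in (0:ℝ)..|ξ|, Real.exp (γ * η ^ α) := by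
    intro ξ
    have hmono : ∀ s : ℝ, 0 ≤ s →
        (∫ η in (0:ℝ)..s, cF * Real.exp (γ * |η| ^ α))
          = cF * ∫ η in (0:ℝ)..s, Real.exp (γ * η ^ α) := by
      intro s hs
      rw [← intervalIntegral.integral_const_mul]
      apply intervalIntegral.integral_congr
      intro x hx
      rw [Set.uIcc_of_le hs] at hx
      show cF * Real.exp (γ * |x| ^ α) = cF * Real.exp (γ * x ^ α)
      rw [abs_of_nonneg hx.1]
    rcases le_or_gt 0 ξ with hξ | hξ
    · have h1 : |∫ η in (0:ℝ)..ξ, f η| ≤ ∫ η in (0:ℝ)..ξ, |f η| :=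
        intervalIntegral.abs_integral_le_integral_abs hξ
      have h2 : (∫ η in (0:ℝ)..ξ, |f η|) ≤ ∫ η in (0:ℝ)..ξ, cF * Real.exp (γ * |η| ^ α) := by
        apply intervalIntegral.integral_mono_on hξ (hcontf.abs.intervalIntegrable _ _)
          (hcontg.intervalIntegrable _ _)
        intro x _
        rw [abs_of_nonneg (hfnn x)]
        exact hpt x
      rw [abs_of_nonneg hξ]
      calc |∫ η in (0:ℝ)..ξ, f η| ≤ ∫ η in (0:ℝ)..ξ, cF * Real.exp (γ * |η| ^ α) :=
            le_trans h1 h2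
        _ = cF * ∫ η in (0:ℝ)..ξ, Real.exp (γ * η ^ α) := hmono ξ hξ
    · have hsymm : (∫ η in (0:ℝ)..ξ, f η) = -∫ η in ξ..(0:ℝ), f η :=
        intervalIntegral.integral_symm ξ 0
      have h1 : |∫ η in ξ..(0:ℝ), f η| ≤ ∫ η in ξ..(0:ℝ), |f η| :=
        intervalIntegral.abs_integral_le_integral_abs hξ.le
      have h2 : (∫ η in ξ..(0:ℝ), |f η|) ≤ ∫ η in ξ..(0:ℝ), cF * Real.exp (γ * |η| ^ α) := by
        apply intervalIntegral.integral_mono_on hξ.le (hcontf.abs.intervalIntegrable _ _)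
          (hcontg.intervalIntegrable _ _)
        intro x _
        rw [abs_of_nonneg (hfnn x)]
        exact hpt x
      have h3 : (∫ η in ξ..(0:ℝ), cF * Real.exp (γ * |η| ^ α))
          = ∫ η in (0:ℝ)..(-ξ), cF * Real.exp (γ * |η| ^ α) := by
        have := intervalIntegral.integral_comp_neg (a := (0:ℝ)) (b := -ξ)
          (fun η => cF * Real.exp (γ * |η| ^ α))
        simp only [abs_neg, neg_neg, neg_zero] at this
        rw [← this]
      have hξ' : (0:ℝ) ≤ -ξ := by linarith
      rw [hsymm, abs_neg, abs_of_neg hξ]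
      calc |∫ η in ξ..(0:ℝ), f η| ≤ ∫ η in (0:ℝ)..(-ξ), cF * Real.exp (γ * |η| ^ α) := by
            rw [← h3]; exact le_trans h1 h2
        _ = cF * ∫ η in (0:ℝ)..(-ξ), Real.exp (γ * η ^ α) := hmono (-ξ) hξ'
  obtain ⟨C₀, hC₀, hlemA⟩ := lemA γ α hγ hα
  have part1 : ∀ ξ : ℝ, |∫ η in (0:ℝ)..ξ, f η| ≤
      cF * C₀ * Real.exp (2 * β * |ξ| ^ α / (n:ℝ)) * (1 + |ξ|) ^ (1 - α) := by
    intro ξ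
    have h1 := hlemA |ξ| (abs_nonneg ξ)
    have h2 := habs ξ
    have hγeq : γ * |ξ| ^ α = 2 * β * |ξ| ^ α / (n:ℝ) := by rw [hγdef]; ring
    calc |∫ η in (0:ℝ)..ξ, f η|
        ≤ cF * ∫ η in (0:ℝ)..|ξ|, Real.exp (γ * η ^ α) := h2
      _ ≤ cF * (C₀ * (Real.exp (γ * |ξ| ^ α) * (1 + |ξ|) ^ (1 - α))) :=
          mul_le_mul_of_nonneg_left h1 hcF.le
      _ = cF * C₀ * Real.exp (2 * β * |ξ| ^ α / (n:ℝ)) * (1 + |ξ|) ^ (1 - α) := by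
          rw [hγeq]; ring
  refine ⟨⟨cF * C₀, by positivity, part1⟩, fun hα1 => ?_⟩
  -- second part
  refine ⟨c₂ ^ 2 * (cF * C₀) ^ n, by positivity, 0, fun ξ _ => ?_⟩
  set I := |∫ η in (0:ℝ)..ξ, f η| with hIdef
  set D := cF * C₀ with hDdef
  have hD : 0 < D := by positivity
  set w := (1 + |ξ|) ^ (1 - α) with hwdef
  have hw0 : 0 ≤ w := Real.rpow_nonneg (by positivity) _
  have hup2 : v ξ ^ (2:ℕ) ≤ (c₂ * Real.exp (-β * |ξ| ^ α)) ^ (2:ℕ) :=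
    pow_le_pow_left₀ (hvpos ξ).le (hup ξ) 2
  have hIn : I ^ (n:ℕ) ≤ (D * Real.exp (2 * β * |ξ| ^ α / (n:ℝ)) * w) ^ (n:ℕ) :=
    pow_le_pow_left₀ (abs_nonneg _) (part1 ξ) n
  have hprod : v ξ ^ (2:ℕ) * I ^ (n:ℕ)
      ≤ (c₂ * Real.exp (-β * |ξ| ^ α)) ^ (2:ℕ)
        * (D * Real.exp (2 * β * |ξ| ^ α / (n:ℝ)) * w) ^ (n:ℕ) :=
    mul_le_mul hup2 hIn (pow_nonneg (abs_nonneg _) _) (by positivity)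
  have hexp : Real.exp (-β * |ξ| ^ α) ^ (2:ℕ)
      * Real.exp (2 * β * |ξ| ^ α / (n:ℝ)) ^ (n:ℕ) = 1 := by
    rw [← Real.exp_nat_mul, ← Real.exp_nat_mul, ← Real.exp_add, ← Real.exp_zero]
    congr 1
    field_simp
    ring
  have hwn : w ^ (n:ℕ) ≤ 1 := by
    rw [hwdef, ← Real.rpow_natCast ((1 + |ξ|) ^ (1 - α)) n,
      ← Real.rpow_mul (by positivity : (0:ℝ) ≤ 1 + |ξ|)]
    apply Real.rpow_le_one_of_one_le_of_nonpos (by simp [abs_nonneg])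
    apply mul_nonpos_of_nonpos_of_nonneg (by linarith) (Nat.cast_nonneg n)
  have hrhs : (c₂ * Real.exp (-β * |ξ| ^ α)) ^ (2:ℕ)
        * (D * Real.exp (2 * β * |ξ| ^ α / (n:ℝ)) * w) ^ (n:ℕ)
      ≤ c₂ ^ 2 * D ^ n := by
    have hexpand : (c₂ * Real.exp (-β * |ξ| ^ α)) ^ (2:ℕ)
        * (D * Real.exp (2 * β * |ξ| ^ α / (n:ℝ)) * w) ^ (n:ℕ)
        = c₂ ^ 2 * D ^ n
          * (Real.exp (-β * |ξ| ^ α) ^ (2:ℕ)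
            * Real.exp (2 * β * |ξ| ^ α / (n:ℝ)) ^ (n:ℕ)) * w ^ (n:ℕ) := by
      rw [mul_pow, mul_pow, mul_pow]
      ring
    rw [hexpand, hexp, mul_one]
    calc c₂ ^ 2 * D ^ n * w ^ (n:ℕ) ≤ c₂ ^ 2 * D ^ n * 1 := by
          apply mul_le_mul_of_nonneg_left hwn (by positivity)
      _ = c₂ ^ 2 * D ^ n := mul_one _
  exact le_trans hprod hrhs
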